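/- Let (a,p) be a truthful mechanism with finite approximation ratio ρ. If, on cost matrix A1, the mechanism allocates proper task n+1 to machine 1 but does not allocate all of the proper tasks n+2,…,2n−1 to machine 1, then ρ ≥ 1 + a. -/

import Mathlib

open scoped ENNReal BigOperators

/-- A feasible allocation of `m` tasks to `n` machines: a 0-1 matrix (represented as a
`Bool`-valued matrix) in which every task is assigned to exactly one machine. -/
structure Alloc (n m : ℕ) where
  assign : Fin n → Fin m → Bool
  feasible : ∀ j : Fin m, ∃! i : Fin n, assign i j = true

/-- The total processing cost incurred by machine `i` under allocation `A`
when her (true) cost row is `ti`. -/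
noncomputable def machineCost {n m : ℕ} (A : Alloc n m) (ti : Fin m → ℝ≥0∞) (i : Fin n) :
    ℝ≥0∞ :=
  ∑ j : Fin m, if A.assign i j then ti j else 0

/-- A deterministic (direct-revelation) mechanism: an allocation rule together with a
payment rule. -/
structure Mechanism (n m : ℕ) where
  alloc : (Fin n → Fin m → ℝ≥0∞) → Alloc n m
  pay : (Fin n → Fin m → ℝ≥0∞) → Fin n → ℝ

/-- The (quasi-linear) utility of machine `i` when the reported cost matrix is `t` and her
true cost row is `trueRow`: her payment minus her incurred true cost, in the extended reals. -/
noncomputable def utility {n m : ℕ} (M : Mechanism n m) (t : Fin n → Fin m → ℝ≥0∞)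
    (trueRow : Fin m → ℝ≥0∞) (i : Fin n) : EReal :=
  (M.pay t i : EReal) - ((machineCost (M.alloc t) trueRow i : ℝ≥0∞) : EReal)

/-- Truthfulness: no machine can strictly increase her utility by misreporting her row,
whatever the (fixed) reports of the other machines are. -/
def Truthful {n m : ℕ} (M : Mechanism n m) : Prop :=
  ∀ (t : Fin n → Fin m → ℝ≥0∞) (i : Fin n) (ti' : Fin m → ℝ≥0∞),
    utility M (Function.update t i ti') (t i) i ≤ utility M t (t i) i

/-- The makespan of allocation `A` on cost matrix `t`. -/
noncomputable def makespan {n m : ℕ} (A : Alloc n m) (t : Fin n → Fin m → ℝ≥0∞) : ℝ≥0∞ :=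
  ⨆ i : Fin n, machineCost A (t i) i

/-- The optimal makespan on cost matrix `t`. -/
noncomputable def optMakespan (n m : ℕ) (t : Fin n → Fin m → ℝ≥0∞) : ℝ≥0∞ :=
  ⨅ A : Alloc n m, makespan A t

/-- The mechanism `M` has approximation ratio (at most) `ρ`. -/
def ApproxRatioLE {n m : ℕ} (M : Mechanism n m) (ρ : ℝ) : Prop :=
  1 ≤ ρ ∧ ∀ t : Fin n → Fin m → ℝ≥0∞,
    makespan (M.alloc t) t ≤ ENNReal.ofReal ρ * optMakespan n m t

/-- The cost matrix `A0` on `n` machines and `2n-1` tasks. Tasks with index `< n` (0-based)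
are the dummy tasks: machine `i` has cost `0` on dummy task `i` and `∞` on the other dummy
tasks. Tasks with index `n, n+1, …, 2n-2` (0-based) are the proper tasks `n+1, …, 2n-1` of
the paper: machines `1` and `2` (indices `0`, `1`) have cost `1` on task `n+1` (index `n`)
and cost `a^{-(j-2)}` on task `n+j` (index `n+j-1`) for `j = 2,…,n-1`; machine `i`
(index `i-1 ≥ 2`), for `3 ≤ i ≤ n`, has cost `a^{-(i-3)}` on task `n+i-1` (index `n+i-2`)
and `∞` on every other proper task. -/
noncomputable def A0 (n : ℕ) (a : ℝ) : Fin n → Fin (2 * n - 1) → ℝ≥0∞ := fun i j =>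
  if (j : ℕ) < n then
    (if (j : ℕ) = (i : ℕ) then 0 else ⊤)
  else if (i : ℕ) ≤ 1 then
    (if (j : ℕ) = n then 1 else ENNReal.ofReal (a⁻¹ ^ ((j : ℕ) - n - 1)))
  else
    (if (j : ℕ) = n + (i : ℕ) - 1 then ENNReal.ofReal (a⁻¹ ^ ((j : ℕ) - n - 1)) else ⊤)

/-- The cost matrix `A1`: identical to `A0` except for machine `1`'s (index `0`'s) costs on
the proper tasks, which become `r` on task `n+1` (index `n`) and `a^{-(j-1)}` on task `n+j`
(index `n+j-1`) for `j = 2,…,n-1`. -/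
noncomputable def A1 (n : ℕ) (r a : ℝ) : Fin n → Fin (2 * n - 1) → ℝ≥0∞ := fun i j =>
  if (i : ℕ) = 0 ∧ n ≤ (j : ℕ) then
    (if (j : ℕ) = n then ENNReal.ofReal r else ENNReal.ofReal (a⁻¹ ^ ((j : ℕ) - n)))
  else A0 n a i j

-- ===== auxiliary lemmas =====

lemma machineCost_ne_top_transfer {n m : ℕ} (A : Alloc n m) (i : Fin n)
    (x y : Fin m → ℝ≥0∞) (h : ∀ j, y j = ⊤ → x j = ⊤)
    (hx : machineCost A x i ≠ ⊤) : machineCost A y i ≠ ⊤ := by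
  rw [machineCost, ENNReal.sum_ne_top] at hx ⊢
  intro j _
  have hxj := hx j (Finset.mem_univ j)
  by_cases hb : A.assign i j
  · simp only [hb, if_true] at hxj ⊢
    intro hy; exact hxj (h j hy)
  · simp [hb]

lemma term_le_machineCost {n m : ℕ} (A : Alloc n m) (ti : Fin m → ℝ≥0∞) (i : Fin n)
    (j : Fin m) (hj : A.assign i j = true) : ti j ≤ machineCost A ti i := by
  rw [machineCost]
  have := Finset.single_le_sum (f := fun j => if A.assign i j then ti j else 0)
    (fun _ _ => zero_le) (Finset.mem_univ j)
  simpa [hj] using this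

lemma two_terms_le_machineCost {n m : ℕ} (A : Alloc n m) (ti : Fin m → ℝ≥0∞) (i : Fin n)
    (j1 j2 : Fin m) (hne : j1 ≠ j2) (h1 : A.assign i j1 = true) (h2 : A.assign i j2 = true) :
    ti j1 + ti j2 ≤ machineCost A ti i := by
  rw [machineCost]
  have hsub : ({j1, j2} : Finset (Fin m)) ⊆ Finset.univ := Finset.subset_univ _
  have := Finset.sum_le_sum_of_subset (f := fun j => if A.assign i j then ti j else 0) hsub
  rw [Finset.sum_pair hne] at this
  simpa [h1, h2] using this

lemma machineCost_le_makespan {n m : ℕ} (A : Alloc n m) (t : Fin n → Fin m → ℝ≥0∞)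
    (i : Fin n) : machineCost A (t i) i ≤ makespan A t :=
  le_iSup (fun i => machineCost A (t i) i) i

lemma forced_holder {n m : ℕ} (A : Alloc n m) (t : Fin n → Fin m → ℝ≥0∞) (i0 : Fin n)
    (d : Fin m) (hcol : ∀ i, i ≠ i0 → t i d = ⊤) (hfin : makespan A t ≠ ⊤) :
    A.assign i0 d = true := by
  obtain ⟨i, hi, -⟩ := A.feasible d
  by_cases h : i = i0
  · exact h ▸ hi
  · exfalso
    apply hfin
    have htop : t i d = ⊤ := hcol i h
    have : (⊤ : ℝ≥0∞) ≤ machineCost A (t i) i := by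
      have := term_le_machineCost A (t i) i d hi
      rw [htop] at this; exact this
    exact top_le_iff.mp (this.trans (machineCost_le_makespan A t i))

def mkAlloc {n m : ℕ} (f : Fin m → Fin n) : Alloc n m :=
  ⟨fun i j => decide (f j = i), by
    intro j
    refine ⟨f j, by simp, ?_⟩
    intro y hy
    exact (of_decide_eq_true hy).symm⟩

lemma mkAlloc_assign {n m : ℕ} (f : Fin m → Fin n) (i : Fin n) (j : Fin m) :
    (mkAlloc f).assign i j = true ↔ f j = i := by
  simp [mkAlloc]

lemma coe_ennreal_toReal' {X : ℝ≥0∞} (h : X ≠ ⊤) : ((X.toReal : ℝ) : EReal) = (X : EReal) := by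
  rw [← EReal.toReal_coe_ennreal]
  exact EReal.coe_toReal (by simpa using h) (EReal.coe_ennreal_ne_bot _)

lemma exchange {n m : ℕ} (M : Mechanism n m) (hM : Truthful M)
    (t : Fin n → Fin m → ℝ≥0∞) (i : Fin n) (s : Fin m → ℝ≥0∞) :
    machineCost (M.alloc t) (t i) i + machineCost (M.alloc (Function.update t i s)) s i ≤
      machineCost (M.alloc (Function.update t i s)) (t i) i +
        machineCost (M.alloc t) s i := by
  set t' := Function.update t i s with ht'
  set C : ℝ≥0∞ := machineCost (M.alloc t) (t i) i with hCdef
  set C' : ℝ≥0∞ := machineCost (M.alloc t') (t i) i with hC'def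
  set D : ℝ≥0∞ := machineCost (M.alloc t) s i with hDdef
  set D' : ℝ≥0∞ := machineCost (M.alloc t') s i with hD'def
  by_cases hC' : C' = ⊤
  · rw [hC', top_add]; exact le_top
  by_cases hD : D = ⊤
  · rw [hD, add_top]; exact le_top
  have h1 : utility M t' (t i) i ≤ utility M t (t i) i := hM t i s
  have h2 : utility M t s i ≤ utility M t' s i := by
    have := hM t' i (t i)
    rw [show Function.update t' i (t i) = t from by
        rw [ht', Function.update_idem, Function.update_eq_self],
      show t' i = s from by rw [ht', Function.update_self]] at this
    exact this
  rw [utility, utility, ← hC'def, ← hCdef] at h1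
  rw [utility, utility, ← hDdef, ← hD'def] at h2
  have hC : C ≠ ⊤ := by
    intro h
    rw [h] at h1
    rw [EReal.coe_ennreal_top] at h1
    rw [show ((M.pay t i : ℝ) : EReal) - (⊤ : EReal) = ⊥ from EReal.sub_top _] at h1
    rw [← coe_ennreal_toReal' hC', ← EReal.coe_sub] at h1
    exact (EReal.coe_ne_bot _) (le_bot_iff.mp h1)
  have hD' : D' ≠ ⊤ := by
    intro h
    rw [h] at h2
    rw [EReal.coe_ennreal_top] at h2
    rw [show ((M.pay t' i : ℝ) : EReal) - (⊤ : EReal) = ⊥ from EReal.sub_top _] at h2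
    rw [← coe_ennreal_toReal' hD, ← EReal.coe_sub] at h2
    exact (EReal.coe_ne_bot _) (le_bot_iff.mp h2)
  rw [← coe_ennreal_toReal' hC', ← coe_ennreal_toReal' hC,
    ← EReal.coe_sub, ← EReal.coe_sub] at h1
  rw [← coe_ennreal_toReal' hD', ← coe_ennreal_toReal' hD,
    ← EReal.coe_sub, ← EReal.coe_sub] at h2
  have r1 : M.pay t' i - C'.toReal ≤ M.pay t i - C.toReal := EReal.coe_le_coe_iff.mp h1
  have r2 : M.pay t i - D.toReal ≤ M.pay t' i - D'.toReal := EReal.coe_le_coe_iff.mp h2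
  have : (C + D').toReal ≤ (C' + D).toReal := by
    rw [ENNReal.toReal_add hC hD', ENNReal.toReal_add hC' hD]
    linarith
  exact (ENNReal.toReal_le_toReal (by finiteness) (by finiteness)).mp this


set_option maxHeartbeats 2000000

/-- **Case 2.**  Let `(a,p)` be a truthful mechanism with finite
approximation ratio `ρ`.  If, on cost matrix `A1`, the mechanism allocates the proper task
`n+1` (0-based index `n`) to machine `1` (index `0`) but does not allocate all of the
proper tasks `n+2,…,2n-1` (indices `n+1,…,2n-2`) to machine `1`, then `ρ ≥ 1 + a`. -/
theorem case_two_lower_bound (n : ℕ) (hn : 3 ≤ n) (r a : ℝ)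
    (hr0 : 0 < r) (hr1 : r < 1) (ha : 1 < a)
    (M : Mechanism n (2 * n - 1)) (hM : Truthful M)
    (ρ : ℝ) (hρ : ApproxRatioLE M ρ)
    (hfirst : (M.alloc (A1 n r a)).assign ⟨0, by omega⟩ ⟨n, by omega⟩ = true)
    (hnotall : ∃ j : Fin (2 * n - 1), n + 1 ≤ (j : ℕ) ∧
      (M.alloc (A1 n r a)).assign ⟨0, by omega⟩ j = false) :
    1 + a ≤ ρ := by
  classical
  obtain ⟨hρ1, hρ2⟩ := hρ
  by_contra hcon
  push_neg at hcon
  -- basic positivity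
  have ha0 : (0:ℝ) < a := lt_trans one_pos ha
  have hainv0 : (0:ℝ) < a⁻¹ := inv_pos.mpr ha0
  have hainv1 : a⁻¹ < 1 := by
    rw [inv_lt_one_iff₀]; right; exact ha
  have hρ0 : (0:ℝ) < ρ := lt_of_lt_of_le one_pos hρ1
  -- machine 0 and task n
  have h0n : 0 < n := by omega
  have hnm : n < 2 * n - 1 := by omega
  set i0 : Fin n := ⟨0, h0n⟩ with hi0def
  set tn : Fin (2 * n - 1) := ⟨n, hnm⟩ with htndef
  set A : Fin n → Fin (2 * n - 1) → ℝ≥0∞ := A1 n r a with hAdef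
  have hfirst' : (M.alloc A).assign i0 tn = true := hfirst
  -- minimal refused proper task j0
  have hSne : ∃ j : Fin (2 * n - 1), n + 1 ≤ (j : ℕ) ∧ (M.alloc A).assign i0 j = false :=
    hnotall
  set S : Finset (Fin (2 * n - 1)) :=
    Finset.univ.filter (fun j => n + 1 ≤ (j : ℕ) ∧ (M.alloc A).assign i0 j = false) with hSdef
  have hSne' : S.Nonempty := by
    obtain ⟨j, hj1, hj2⟩ := hSne
    exact ⟨j, by simp [hSdef, hj1, hj2]; omega⟩
  set j0 : Fin (2 * n - 1) := S.min' hSne' with hj0def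
  have hj0mem : j0 ∈ S := S.min'_mem hSne'
  have hj0p : n + 1 ≤ (j0 : ℕ) := by
    have := hj0mem; rw [hSdef, Finset.mem_filter] at this; exact this.2.1
  have hj0B : (M.alloc A).assign i0 j0 = false := by
    have := hj0mem; rw [hSdef, Finset.mem_filter] at this; exact this.2.2
  have hmin : ∀ x : Fin (2 * n - 1), n + 1 ≤ (x : ℕ) → (x : ℕ) < (j0 : ℕ) →
      (M.alloc A).assign i0 x = true := by
    intro x hx1 hx2
    by_contra hbx
    rw [Bool.not_eq_true] at hbx
    have hxS : x ∈ S := by simp [hSdef, hx1, hbx]; omega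
    have := S.min'_le x hxS
    rw [← hj0def] at this
    exact absurd (Fin.le_def.mp this) (by omega)

  -- real constants
  set kv : ℕ := (j0 : ℕ) - n with hkv
  have hkv1 : 1 ≤ kv := by omega
  set b : ℝ := a⁻¹ ^ kv with hbdef
  set c : ℝ := a⁻¹ ^ (kv - 1) with hcdef
  have hb0 : (0:ℝ) < b := pow_pos hainv0 _
  have hc0 : (0:ℝ) < c := pow_pos hainv0 _
  have hcb : c = a * b := by
    have hpow : a⁻¹ ^ kv = a⁻¹ ^ (kv - 1) * a⁻¹ := by
      rw [← pow_succ]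
      congr 1
      omega
    rw [hcdef, hbdef, hpow]
    field_simp
  set θ : ℝ := (1 + a - ρ) * b with hθdef
  have hθ : (0:ℝ) < θ := mul_pos (by linarith) hb0
  set δ : ℝ := θ / 4 with hδdef
  have hδ0 : (0:ℝ) < δ := by rw [hδdef]; positivity
  set ε : ℝ := θ / (4 * (a + 2)) with hεdef
  have hε0 : (0:ℝ) < ε := by rw [hεdef]; positivity
  set y : ℝ := b + ε with hydef
  have hby : b < y := by rw [hydef]; linarith
  have hy0 : (0:ℝ) < y := by linarith
  have hθc : θ ≤ c := by
    rw [hθdef, hcb]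
    nlinarith [hb0]
  have hδc : 0 ≤ c - δ := by rw [hδdef]; linarith
  -- value lemmas for the matrix A
  have hA_i0_proper : ∀ j : Fin (2 * n - 1), n ≤ (j : ℕ) →
      A i0 j = (if (j : ℕ) = n then ENNReal.ofReal r
        else ENNReal.ofReal (a⁻¹ ^ ((j : ℕ) - n))) := by
    intro j hj
    rw [hAdef]
    simp only [A1, true_and]
    rw [if_pos ⟨rfl, hj⟩]
  have hA_i0_dummy : ∀ j : Fin (2 * n - 1), (j : ℕ) < n →
      A i0 j = (if (j : ℕ) = 0 then 0 else ⊤) := by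
    intro j hj
    rw [hAdef]
    simp only [A1, A0, true_and]
    rw [if_neg (show ¬((i0 : ℕ) = 0 ∧ n ≤ (j : ℕ)) from fun h => absurd h.2 (by omega)),
      if_pos hj]
  have hA_other : ∀ i : Fin n, i ≠ i0 → ∀ j, A i j = A0 n a i j := by
    intro i hi j
    rw [hAdef]; simp only [A1]
    have hcond : ¬((i : ℕ) = 0 ∧ n ≤ (j : ℕ)) := by
      intro h
      apply hi
      apply Fin.val_injective
      rw [h.1]
    rw [if_neg hcond]
  have hA0_dummy : ∀ (i : Fin n) (j : Fin (2 * n - 1)), (j : ℕ) < n →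
      A0 n a i j = (if (j : ℕ) = (i : ℕ) then 0 else ⊤) := by
    intro i j hj; simp only [A0]; rw [if_pos hj]
  have hA0_m1 : ∀ i : Fin n, (i : ℕ) ≤ 1 → ∀ j : Fin (2 * n - 1), n ≤ (j : ℕ) →
      A0 n a i j = (if (j : ℕ) = n then 1
        else ENNReal.ofReal (a⁻¹ ^ ((j : ℕ) - n - 1))) := by
    intro i hi j hj; simp only [A0]
    rw [if_neg (by omega), if_pos hi]
  have hA0_hi : ∀ i : Fin n, 2 ≤ (i : ℕ) → ∀ j : Fin (2 * n - 1), n ≤ (j : ℕ) →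
      A0 n a i j = (if (j : ℕ) = n + (i : ℕ) - 1
        then ENNReal.ofReal (a⁻¹ ^ ((j : ℕ) - n - 1)) else ⊤) := by
    intro i hi j hj; simp only [A0]
    rw [if_neg (by omega), if_neg (by omega)]
  -- the deviation row s of machine 0
  set s : Fin (2 * n - 1) → ℝ≥0∞ := fun j =>
    if (j : ℕ) = (j0 : ℕ) then ENNReal.ofReal y
    else if n ≤ (j : ℕ) ∧ (M.alloc A).assign i0 j = true then 0
    else A i0 j with hsdef
  have hs_j0 : s j0 = ENNReal.ofReal y := by rw [hsdef]; simp
  have hs_held : ∀ j : Fin (2 * n - 1), (j : ℕ) ≠ (j0 : ℕ) → n ≤ (j : ℕ) →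
      (M.alloc A).assign i0 j = true → s j = 0 := by
    intro j h1 h2 h3
    rw [hsdef]; simp only
    rw [if_neg h1, if_pos ⟨h2, h3⟩]
  have hs_else : ∀ j : Fin (2 * n - 1), (j : ℕ) ≠ (j0 : ℕ) →
      ¬(n ≤ (j : ℕ) ∧ (M.alloc A).assign i0 j = true) → s j = A i0 j := by
    intro j h1 h2
    rw [hsdef]; simp only
    rw [if_neg h1, if_neg h2]
  have hsA_top : ∀ j, s j = ⊤ → A i0 j = ⊤ := by
    intro j hj
    rw [hsdef] at hj; simp only at hj
    by_cases h1 : (j : ℕ) = (j0 : ℕ)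
    · rw [if_pos h1] at hj; exact absurd hj ENNReal.ofReal_ne_top
    · rw [if_neg h1] at hj
      by_cases h2 : n ≤ (j : ℕ) ∧ (M.alloc A).assign i0 j = true
      · rw [if_pos h2] at hj; exact absurd hj (by simp)
      · rw [if_neg h2] at hj; exact hj
  have hAs_top : ∀ j, A i0 j = ⊤ → s j = ⊤ := by
    intro j hj
    have hjn : (j : ℕ) < n := by
      by_contra h
      rw [hA_i0_proper j (by omega)] at hj
      by_cases h2 : (j : ℕ) = n
      · rw [if_pos h2] at hj; exact ENNReal.ofReal_ne_top hj
      · rw [if_neg h2] at hj; exact ENNReal.ofReal_ne_top hj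
    rw [hs_else j (by omega) (fun h => absurd h.1 (by omega))]
    exact hj
  -- the deviated instance u
  set u : Fin n → Fin (2 * n - 1) → ℝ≥0∞ := Function.update A i0 s with hudef
  have hu0 : u i0 = s := by rw [hudef]; exact Function.update_self i0 s A
  have hu_other : ∀ i : Fin n, i ≠ i0 → u i = A i := by
    intro i hi; rw [hudef]; exact Function.update_of_ne hi s A
  -- the benchmark allocation
  set tgt : Fin (2 * n - 1) → Fin n := fun j =>
    if h : (j : ℕ) < n then ⟨(j : ℕ), h⟩
    else if (j : ℕ) = n then i0
    else if (M.alloc A).assign i0 j = true then i0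
    else if (j : ℕ) = (j0 : ℕ) then i0
    else ⟨(j : ℕ) - n + 1, by have := j.isLt; omega⟩ with htgtdef
  have htgt_cases : ∀ (j : Fin (2 * n - 1)) (i : Fin n), tgt j = i →
      ((j : ℕ) < n ∧ (j : ℕ) = (i : ℕ)) ∨
      ((j : ℕ) = n ∧ i = i0) ∨
      (n < (j : ℕ) ∧ (M.alloc A).assign i0 j = true ∧ i = i0) ∨
      ((j : ℕ) = (j0 : ℕ) ∧ i = i0) ∨
      (n < (j : ℕ) ∧ (M.alloc A).assign i0 j = false ∧ (j : ℕ) ≠ (j0 : ℕ) ∧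
        (j : ℕ) = n + (i : ℕ) - 1 ∧ 2 ≤ (i : ℕ)) := by
    intro j i hij
    simp only [htgtdef] at hij
    by_cases h1 : (j : ℕ) < n
    · rw [dif_pos h1] at hij
      exact Or.inl ⟨h1, by rw [← hij]⟩
    · rw [dif_neg h1] at hij
      by_cases h2 : (j : ℕ) = n
      · rw [if_pos h2] at hij
        exact Or.inr (Or.inl ⟨h2, hij.symm⟩)
      · rw [if_neg h2] at hij
        by_cases h3 : (M.alloc A).assign i0 j = true
        · rw [if_pos h3] at hij
          exact Or.inr (Or.inr (Or.inl ⟨by omega, h3, hij.symm⟩))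
        · rw [if_neg h3] at hij
          by_cases h4 : (j : ℕ) = (j0 : ℕ)
          · rw [if_pos h4] at hij
            exact Or.inr (Or.inr (Or.inr (Or.inl ⟨h4, hij.symm⟩)))
          · rw [if_neg h4] at hij
            have hval : (i : ℕ) = (j : ℕ) - n + 1 := by rw [← hij]
            refine Or.inr (Or.inr (Or.inr (Or.inr ⟨by omega,
              Bool.not_eq_true _ ▸ h3, h4, by omega, by omega⟩)))
  have hi0val : (i0 : ℕ) = 0 := rfl
  have hTfinA : ∀ (i : Fin n) (j : Fin (2 * n - 1)), tgt j = i → A i j ≠ ⊤ := by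
    intro i j hij
    rcases htgt_cases j i hij with ⟨h1, h2⟩ | ⟨h1, h2⟩ | ⟨h1, h2, h3⟩ | ⟨h1, h2⟩ |
      ⟨h1, h2, h3, h4, h5⟩
    · by_cases hz : i = i0
      · rw [hz, hA_i0_dummy j h1]
        rw [hz, hi0val] at h2
        rw [if_pos h2]; simp
      · rw [hA_other i hz j, hA0_dummy i j h1, if_pos h2]; simp
    · rw [h2, hA_i0_proper j (by omega), if_pos h1]; exact ENNReal.ofReal_ne_top
    · rw [h3, hA_i0_proper j (by omega), if_neg (by omega)]; exact ENNReal.ofReal_ne_top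
    · rw [h2, hA_i0_proper j (by omega), if_neg (by omega)]; exact ENNReal.ofReal_ne_top
    · have hz : i ≠ i0 := by intro h; rw [h, hi0val] at h5; omega
      rw [hA_other i hz j, hA0_hi i h5 j (by omega), if_pos h4]
      exact ENNReal.ofReal_ne_top
  have hTfinU : ∀ (i : Fin n) (j : Fin (2 * n - 1)), tgt j = i → u i j ≠ ⊤ := by
    intro i j hij
    by_cases hz : i = i0
    · rw [hz, hu0]
      intro htop
      exact hTfinA i0 j (hz ▸ hij) (hsA_top j htop)
    · rw [hu_other i hz]; exact hTfinA i j hij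
  have hmkfin : ∀ v : Fin n → Fin (2 * n - 1) → ℝ≥0∞,
      (∀ i j, tgt j = i → v i j ≠ ⊤) → makespan (mkAlloc tgt) v ≠ ⊤ := by
    intro v hv
    have hsum : (∑ i : Fin n, machineCost (mkAlloc tgt) (v i) i) ≠ ⊤ := by
      rw [ENNReal.sum_ne_top]
      intro i _
      rw [machineCost, ENNReal.sum_ne_top]
      intro j _
      by_cases hb : (mkAlloc tgt).assign i j = true
      · rw [if_pos hb]; exact hv i j ((mkAlloc_assign tgt i j).mp hb)
      · rw [if_neg (by simp [hb])]; simp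
    refine ne_top_of_le_ne_top hsum ?_
    rw [makespan]
    exact iSup_le fun i => Finset.single_le_sum
      (f := fun i => machineCost (mkAlloc tgt) (v i) i)
      (fun _ _ => zero_le) (Finset.mem_univ i)
  have happrox : ∀ v : Fin n → Fin (2 * n - 1) → ℝ≥0∞,
      makespan (mkAlloc tgt) v ≠ ⊤ → makespan (M.alloc v) v ≠ ⊤ := by
    intro v hv
    refine ne_top_of_le_ne_top (b := ENNReal.ofReal ρ * makespan (mkAlloc tgt) v)
      (ENNReal.mul_ne_top ENNReal.ofReal_ne_top hv) ?_
    refine (hρ2 v).trans (mul_le_mul_right ?_ _)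
    exact iInf_le (fun T => makespan T v) (mkAlloc tgt)
  have hfinA : makespan (M.alloc A) A ≠ ⊤ := happrox A (hmkfin A hTfinA)
  have hfinU : makespan (M.alloc u) u ≠ ⊤ := happrox u (hmkfin u hTfinU)
  -- pin: machine 0 does not get j0 at u
  have hAj0 : A i0 j0 = ENNReal.ofReal b := by
    rw [hA_i0_proper j0 (by omega), if_neg (by omega), hbdef, hkv]
  have hpinA : (M.alloc u).assign i0 j0 = false := by
    by_contra hBu'
    rw [Bool.not_eq_false] at hBu'
    have key : ∀ j : Fin (2 * n - 1),
        (if (M.alloc u).assign i0 j then A i0 j else 0) +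
          (if (M.alloc A).assign i0 j then s j else 0) +
          (if j = j0 then ENNReal.ofReal ε else 0) ≤
        (if (M.alloc A).assign i0 j then A i0 j else 0) +
          (if (M.alloc u).assign i0 j then s j else 0) := by
      intro j
      by_cases hjj : j = j0
      · subst hjj
        simp only [hBu', hj0B, hs_j0, hAj0, if_true, Bool.false_eq_true, if_false,
          eq_self_iff_true, add_zero, zero_add]
        rw [← ENNReal.ofReal_add hb0.le hε0.le, ← hydef]
      · rw [if_neg hjj, add_zero]
        by_cases hheld : n ≤ (j : ℕ) ∧ (M.alloc A).assign i0 j = true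
        · have hs0 : s j = 0 :=
            hs_held j (fun h => hjj (Fin.val_injective h)) hheld.1 hheld.2
          rw [hheld.2, hs0]
          by_cases hbu : (M.alloc u).assign i0 j <;> simp [hbu]
        · have hseq : s j = A i0 j :=
            hs_else j (fun h => hjj (Fin.val_injective h)) hheld
          rw [hseq]
          exact le_of_eq (add_comm _ _)
    have hsum := Finset.sum_le_sum (fun j (_ : j ∈ Finset.univ) => key j)
    simp only [Finset.sum_add_distrib] at hsum
    rw [Finset.sum_ite_eq' Finset.univ j0 (fun _ => ENNReal.ofReal ε),
      if_pos (Finset.mem_univ j0)] at hsum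
    have hsum' : machineCost (M.alloc u) (A i0) i0 + machineCost (M.alloc A) s i0 +
        ENNReal.ofReal ε ≤
        machineCost (M.alloc A) (A i0) i0 + machineCost (M.alloc u) s i0 := hsum
    have hexch := exchange M hM A i0 s
    rw [← hudef] at hexch
    have hCfin : machineCost (M.alloc A) (A i0) i0 ≠ ⊤ :=
      ne_top_of_le_ne_top hfinA (machineCost_le_makespan _ _ _)
    have hD'fin : machineCost (M.alloc u) s i0 ≠ ⊤ := by
      have h1 := machineCost_le_makespan (M.alloc u) u i0
      rw [hu0] at h1
      exact ne_top_of_le_ne_top hfinU h1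
    have hC'fin : machineCost (M.alloc u) (A i0) i0 ≠ ⊤ :=
      machineCost_ne_top_transfer (M.alloc u) i0 s (A i0) hAs_top hD'fin
    have hDfin : machineCost (M.alloc A) s i0 ≠ ⊤ :=
      machineCost_ne_top_transfer (M.alloc A) i0 (A i0) s hsA_top hCfin
    have hfinsum : machineCost (M.alloc u) (A i0) i0 + machineCost (M.alloc A) s i0 ≠ ⊤ :=
      ENNReal.add_ne_top.mpr ⟨hC'fin, hDfin⟩
    have hle : ENNReal.ofReal ε ≤ 0 := by
      refine (ENNReal.add_le_add_iff_left hfinsum).mp ?_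
      rw [add_zero]
      exact hsum'.trans hexch
    rw [nonpos_iff_eq_zero, ENNReal.ofReal_eq_zero] at hle
    linarith
  -- the machine istar receiving j0 at u
  obtain ⟨istar, histar, -⟩ := (M.alloc u).feasible j0
  have histar0 : istar ≠ i0 := by
    intro h
    rw [h, hpinA] at histar
    exact Bool.noConfusion histar
  have hAistarA0 : ∀ j, u istar j = A0 n a istar j := by
    intro j; rw [hu_other istar histar0, hA_other istar histar0]
  have histar_ne_top : u istar j0 ≠ ⊤ := by
    intro htop
    apply hfinU
    have h1 := term_le_machineCost (M.alloc u) (u istar) istar j0 histar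
    rw [htop] at h1
    exact top_le_iff.mp (h1.trans (machineCost_le_makespan _ _ _))
  have histarv_pos : 1 ≤ (istar : ℕ) := by
    rcases Nat.eq_zero_or_pos (istar : ℕ) with h | h
    · exact absurd (Fin.val_injective (h.trans hi0val.symm)) histar0
    · omega
  have hval : u istar j0 = ENNReal.ofReal c := by
    rw [hAistarA0 j0]
    by_cases h1 : (istar : ℕ) ≤ 1
    · rw [hA0_m1 istar h1 j0 (by omega), if_neg (by omega), hcdef,
        show (j0 : ℕ) - n - 1 = kv - 1 from by omega]
    · have h2 : 2 ≤ (istar : ℕ) := by omega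
      have h3 : (j0 : ℕ) = n + (istar : ℕ) - 1 := by
        by_contra h4
        apply histar_ne_top
        rw [hAistarA0 j0, hA0_hi istar h2 j0 (by omega), if_neg h4]
      rw [hA0_hi istar h2 j0 (by omega), if_pos h3, hcdef,
        show (j0 : ℕ) - n - 1 = kv - 1 from by omega]
  have histar_hit : (istar : ℕ) = 1 ∨ (j0 : ℕ) = n + (istar : ℕ) - 1 := by
    by_cases h1 : (istar : ℕ) ≤ 1
    · left; omega
    · right
      by_contra h4
      apply histar_ne_top
      rw [hAistarA0 j0, hA0_hi istar (by omega) j0 (by omega), if_neg h4]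
  -- the dummy task of istar
  have histar_lt : (istar : ℕ) < 2 * n - 1 := by have := istar.isLt; omega
  set dstar : Fin (2 * n - 1) := ⟨(istar : ℕ), histar_lt⟩ with hdstardef
  have hdv : (dstar : ℕ) = (istar : ℕ) := rfl
  have hdn : (dstar : ℕ) < n := istar.isLt
  have hd_ne_j0 : dstar ≠ j0 := by
    intro h
    have h2 := congrArg Fin.val h
    omega
  have hu_dself : u istar dstar = 0 := by
    rw [hAistarA0 dstar, hA0_dummy istar dstar hdn, if_pos hdv]
  have hcol : ∀ i : Fin n, i ≠ istar → u i dstar = ⊤ := by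
    intro i hi
    by_cases hz : i = i0
    · rw [hz, hu0, hs_else dstar (by omega) (fun h => absurd h.1 (by omega)),
        hA_i0_dummy dstar hdn, if_neg (show ¬(dstar : ℕ) = 0 by omega)]
    · rw [hu_other i hz, hA_other i hz, hA0_dummy i dstar hdn, if_neg]
      intro h
      exact hi (Fin.val_injective ((hdv ▸ h : (dstar : ℕ) = (i : ℕ)).symm.trans hdv))
  have hforce_u : (M.alloc u).assign istar dstar = true :=
    forced_holder (M.alloc u) u istar dstar hcol hfinU
  -- second deviation row s' of machine istar
  set s' : Fin (2 * n - 1) → ℝ≥0∞ := fun j =>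
    if j = dstar then ENNReal.ofReal b
    else if j = j0 then ENNReal.ofReal (c - δ)
    else u istar j with hs'def
  have hs'_d : s' dstar = ENNReal.ofReal b := by simp [hs'def]
  have hs'_j0 : s' j0 = ENNReal.ofReal (c - δ) := by
    simp [hs'def, Ne.symm hd_ne_j0]
  have hs'_else : ∀ j, j ≠ dstar → j ≠ j0 → s' j = u istar j := by
    intro j h1 h2; rw [hs'def]; simp only; rw [if_neg h1, if_neg h2]
  set u' : Fin n → Fin (2 * n - 1) → ℝ≥0∞ := Function.update u istar s' with hu'def
  have hu'star : u' istar = s' := by rw [hu'def]; exact Function.update_self istar s' u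
  have hu'_other : ∀ i, i ≠ istar → u' i = u i := by
    intro i hi; rw [hu'def]; exact Function.update_of_ne hi s' u
  have hu'_i0 : u' i0 = s := by rw [hu'_other i0 (Ne.symm histar0), hu0]
  -- sharp bound for the benchmark allocation on u'
  have hsharp : makespan (mkAlloc tgt) u' ≤ ENNReal.ofReal y := by
    rw [makespan]
    refine iSup_le fun i => ?_
    by_cases hz : i = i0
    · subst hz
      have hbnd : ∀ j : Fin (2 * n - 1),
          (if (mkAlloc tgt).assign i0 j then u' i0 j else 0) ≤
          (if j = j0 then ENNReal.ofReal y else 0) := by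
        intro j
        by_cases hassign : (mkAlloc tgt).assign i0 j = true
        · have htj : tgt j = i0 := (mkAlloc_assign tgt i0 j).mp hassign
          rw [if_pos hassign, hu'_i0]
          by_cases hjj : j = j0
          · subst hjj
            rw [hs_j0, if_pos rfl]
          · rw [if_neg hjj]
            refine le_of_eq ?_
            rcases htgt_cases j i0 htj with ⟨h1, h2⟩ | ⟨h1, h2⟩ | ⟨h1, h2, h3⟩ | ⟨h1, h2⟩ |
              ⟨h1, h2, h3, h4, h5⟩
            · rw [hi0val] at h2
              rw [hs_else j (by omega) (fun h => absurd h.1 (by omega)),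
                hA_i0_dummy j h1, if_pos h2]
            · have hjtn : j = tn := Fin.val_injective (by rw [h1])
              exact hs_held j (by omega) (by omega) (by rw [hjtn]; exact hfirst')
            · exact hs_held j (by omega) (by omega) h2
            · exact absurd (Fin.val_injective h1 : j = j0) hjj
            · rw [hi0val] at h5
              omega
        · rw [if_neg hassign]
          exact zero_le
      calc machineCost (mkAlloc tgt) (u' i0) i0
          ≤ ∑ j : Fin (2 * n - 1), (if j = j0 then ENNReal.ofReal y else 0) := by
            rw [machineCost]; exact Finset.sum_le_sum (fun j _ => hbnd j)
        _ = ENNReal.ofReal y := by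
            rw [Finset.sum_ite_eq' Finset.univ j0 (fun _ => ENNReal.ofReal y),
              if_pos (Finset.mem_univ j0)]
    · by_cases hstar : i = istar
      · rw [hstar]
        have hbnd : ∀ j : Fin (2 * n - 1),
            (if (mkAlloc tgt).assign istar j then u' istar j else 0) ≤
            (if j = dstar then ENNReal.ofReal b else 0) := by
          intro j
          by_cases hassign : (mkAlloc tgt).assign istar j = true
          · have htj : tgt j = istar := (mkAlloc_assign tgt istar j).mp hassign
            rw [if_pos hassign]
            rcases htgt_cases j istar htj with ⟨h1, h2⟩ | ⟨h1, h2⟩ | ⟨h1, h2, h3⟩ | ⟨h1, h2⟩ |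
              ⟨h1, h2, h3, h4, h5⟩
            · have hjd : j = dstar := Fin.val_injective (h2.trans hdv.symm)
              rw [hjd, if_pos rfl, hu'star, hs'_d]
            · exact absurd h2 histar0
            · exact absurd h3 histar0
            · exact absurd h2 histar0
            · exfalso
              rcases histar_hit with hh | hh
              · omega
              · omega
          · rw [if_neg hassign]
            exact zero_le
        calc machineCost (mkAlloc tgt) (u' istar) istar
            ≤ ∑ j : Fin (2 * n - 1), (if j = dstar then ENNReal.ofReal b else 0) := by
              rw [machineCost]; exact Finset.sum_le_sum (fun j _ => hbnd j)
          _ = ENNReal.ofReal b := by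
              rw [Finset.sum_ite_eq' Finset.univ dstar (fun _ => ENNReal.ofReal b),
                if_pos (Finset.mem_univ dstar)]
          _ ≤ ENNReal.ofReal y := ENNReal.ofReal_le_ofReal hby.le
      · have hrow : ∀ j, u' i j = A0 n a i j := fun j => by
          rw [hu'_other i hstar, hu_other i hz, hA_other i hz j]
        have htk_lt : n + (i : ℕ) - 1 < 2 * n - 1 := by have := i.isLt; omega
        set tk : Fin (2 * n - 1) := ⟨n + (i : ℕ) - 1, htk_lt⟩ with htkdef
        have hbnd : ∀ j : Fin (2 * n - 1),
            (if (mkAlloc tgt).assign i j then u' i j else 0) ≤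
            (if j = tk then ENNReal.ofReal b else 0) := by
          intro j
          by_cases hassign : (mkAlloc tgt).assign i j = true
          · have htj : tgt j = i := (mkAlloc_assign tgt i j).mp hassign
            rw [if_pos hassign]
            rcases htgt_cases j i htj with ⟨h1, h2⟩ | ⟨h1, h2⟩ | ⟨h1, h2, h3⟩ | ⟨h1, h2⟩ |
              ⟨h1, h2, h3, h4, h5⟩
            · rw [hrow j, hA0_dummy i j h1, if_pos h2]
              exact zero_le
            · exact absurd h2 hz
            · exact absurd h3 hz
            · exact absurd h2 hz
            · have hjtk : j = tk := Fin.val_injective (by rw [h4])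
              have hgt : (j0 : ℕ) < (j : ℕ) := by
                rcases Nat.lt_or_ge (j : ℕ) (j0 : ℕ) with hlt | hge
                · exact absurd (hmin j (by omega) hlt) (by simp [h2])
                · omega
              rw [if_pos hjtk, hrow j, hA0_hi i h5 j (by omega), if_pos h4]
              refine ENNReal.ofReal_le_ofReal ?_
              rw [hbdef]
              exact pow_le_pow_of_le_one hainv0.le hainv1.le (by omega)
          · rw [if_neg hassign]
            exact zero_le
        calc machineCost (mkAlloc tgt) (u' i) i
            ≤ ∑ j : Fin (2 * n - 1), (if j = tk then ENNReal.ofReal b else 0) := by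
              rw [machineCost]; exact Finset.sum_le_sum (fun j _ => hbnd j)
          _ = ENNReal.ofReal b := by
              rw [Finset.sum_ite_eq' Finset.univ tk (fun _ => ENNReal.ofReal b),
                if_pos (Finset.mem_univ tk)]
          _ ≤ ENNReal.ofReal y := ENNReal.ofReal_le_ofReal hby.le
  have hmu' : makespan (M.alloc u') u' ≤ ENNReal.ofReal ρ * ENNReal.ofReal y := by
    refine (hρ2 u').trans (mul_le_mul_right ?_ _)
    exact (iInf_le (fun T => makespan T u') (mkAlloc tgt)).trans hsharp
  have hfinU' : makespan (M.alloc u') u' ≠ ⊤ :=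
    ne_top_of_le_ne_top (ENNReal.mul_ne_top ENNReal.ofReal_ne_top ENNReal.ofReal_ne_top) hmu'
  have hcol' : ∀ i : Fin n, i ≠ istar → u' i dstar = ⊤ := by
    intro i hi; rw [hu'_other i hi]; exact hcol i hi
  have hforce_u' : (M.alloc u').assign istar dstar = true :=
    forced_holder (M.alloc u') u' istar dstar hcol' hfinU'
  -- pin: istar keeps j0 at u'
  have hpin2 : (M.alloc u').assign istar j0 = true := by
    by_contra hB2
    rw [Bool.not_eq_true] at hB2
    have key : ∀ j : Fin (2 * n - 1),
        (if (M.alloc u').assign istar j then u istar j else 0) +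
          (if (M.alloc u).assign istar j then s' j else 0) +
          (if j = j0 then ENNReal.ofReal δ else 0) ≤
        (if (M.alloc u).assign istar j then u istar j else 0) +
          (if (M.alloc u').assign istar j then s' j else 0) := by
      intro j
      by_cases hjj : j = j0
      · subst hjj
        simp only [hB2, histar, hs'_j0, hval, Bool.false_eq_true, if_false, if_true,
          eq_self_iff_true, add_zero, zero_add]
        rw [← ENNReal.ofReal_add hδc hδ0.le, show c - δ + δ = c from by ring]
      · rw [if_neg hjj, add_zero]
        by_cases hjd : j = dstar
        · subst hjd
          simp [hforce_u, hforce_u', hu_dself]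
        · rw [hs'_else j hjd hjj]
          exact le_of_eq (add_comm _ _)
    have hsum := Finset.sum_le_sum (fun j (_ : j ∈ Finset.univ) => key j)
    simp only [Finset.sum_add_distrib] at hsum
    rw [Finset.sum_ite_eq' Finset.univ j0 (fun _ => ENNReal.ofReal δ),
      if_pos (Finset.mem_univ j0)] at hsum
    have hsum' : machineCost (M.alloc u') (u istar) istar +
        machineCost (M.alloc u) s' istar + ENNReal.ofReal δ ≤
        machineCost (M.alloc u) (u istar) istar +
        machineCost (M.alloc u') s' istar := hsum
    have hexch := exchange M hM u istar s'
    rw [← hu'def] at hexch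
    have hCfin : machineCost (M.alloc u) (u istar) istar ≠ ⊤ :=
      ne_top_of_le_ne_top hfinU (machineCost_le_makespan _ _ _)
    have hD'fin : machineCost (M.alloc u') s' istar ≠ ⊤ := by
      have h1 := machineCost_le_makespan (M.alloc u') u' istar
      rw [hu'star] at h1
      exact ne_top_of_le_ne_top hfinU' h1
    have hus'_top : ∀ j, u istar j = ⊤ → s' j = ⊤ := by
      intro j hj
      have hjd : j ≠ dstar := by intro h; rw [h, hu_dself] at hj; simp at hj
      have hjj : j ≠ j0 := by intro h; rw [h, hval] at hj; exact ENNReal.ofReal_ne_top hj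
      rw [hs'_else j hjd hjj]; exact hj
    have hs'u_top : ∀ j, s' j = ⊤ → u istar j = ⊤ := by
      intro j hj
      by_cases hjd : j = dstar
      · rw [hjd, hs'_d] at hj; exact absurd hj ENNReal.ofReal_ne_top
      by_cases hjj : j = j0
      · rw [hjj, hs'_j0] at hj; exact absurd hj ENNReal.ofReal_ne_top
      rw [hs'_else j hjd hjj] at hj; exact hj
    have hC'fin : machineCost (M.alloc u') (u istar) istar ≠ ⊤ :=
      machineCost_ne_top_transfer (M.alloc u') istar s' (u istar) hus'_top hD'fin
    have hDfin : machineCost (M.alloc u) s' istar ≠ ⊤ :=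
      machineCost_ne_top_transfer (M.alloc u) istar (u istar) s' hs'u_top hCfin
    have hfinsum : machineCost (M.alloc u') (u istar) istar +
        machineCost (M.alloc u) s' istar ≠ ⊤ := ENNReal.add_ne_top.mpr ⟨hC'fin, hDfin⟩
    have hle : ENNReal.ofReal δ ≤ 0 := by
      refine (ENNReal.add_le_add_iff_left hfinsum).mp ?_
      rw [add_zero]
      exact hsum'.trans hexch
    rw [nonpos_iff_eq_zero, ENNReal.ofReal_eq_zero] at hle
    linarith
  -- final numeric contradiction
  have hload : ENNReal.ofReal b + ENNReal.ofReal (c - δ) ≤ makespan (M.alloc u') u' := by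
    have h2 := two_terms_le_machineCost (M.alloc u') (u' istar) istar dstar j0 hd_ne_j0
      hforce_u' hpin2
    have e1 : u' istar dstar = ENNReal.ofReal b := by rw [hu'star, hs'_d]
    have e2 : u' istar j0 = ENNReal.ofReal (c - δ) := by rw [hu'star, hs'_j0]
    rw [e1, e2] at h2
    exact h2.trans (machineCost_le_makespan _ _ _)
  have hfinal : b + (c - δ) ≤ ρ * y := by
    have h3 : ENNReal.ofReal (b + (c - δ)) ≤ ENNReal.ofReal (ρ * y) := by
      rw [ENNReal.ofReal_add hb0.le hδc, ENNReal.ofReal_mul (by linarith : (0:ℝ) ≤ ρ)]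
      exact hload.trans hmu'
    exact (ENNReal.ofReal_le_ofReal_iff (mul_nonneg hρ0.le hy0.le)).mp h3
  have hρa2 : ρ ≤ a + 2 := by linarith
  have hρε : ρ * ε ≤ θ / 4 := by
    have h5 : ρ * θ ≤ (a + 2) * θ := mul_le_mul_of_nonneg_right hρa2 hθ.le
    have h6 : ρ * θ / (4 * (a + 2)) ≤ (a + 2) * θ / (4 * (a + 2)) :=
      (div_le_div_iff_of_pos_right (by positivity)).mpr h5
    have h7 : (a + 2) * θ / (4 * (a + 2)) = θ / 4 := by
      field_simp
    calc ρ * ε = ρ * θ / (4 * (a + 2)) := by rw [hεdef]; ring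
      _ ≤ θ / 4 := h7 ▸ h6
  have hexp : ρ * y = ρ * b + ρ * ε := by rw [hydef]; ring
  have hθeq : θ = b + a * b - ρ * b := by rw [hθdef]; ring
  have hδeq : δ = θ / 4 := hδdef
  linarith [hfinal, hρε, hθ, hexp, hθeq, hcb]
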